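/- Monotonicity of rank: if 𝕄 is a model with universe λ and countable vocabulary, ∅ ≠ v ⊆ w are finite subsets of λ, and rk(w, 𝕄) ≥ α ≥ β, then rk(v, 𝕄) ≥ β. -/
import Mathlib

open FirstOrder Cardinal

attribute [local instance] Classical.propDecidable

section Rank
variable (L : Language) (M : Type) [L.Structure M]

/-- The condition for `rk(w) ≥ 0`: every quantifier-free formula satisfied by an
injective enumeration of `w` admits uncountably many replacements at each coordinate. -/
def RkBase (w : Finset M) : Prop :=
  ∀ (n : ℕ) (v : Fin n → M), Function.Injective v → Set.range v = ↑w →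
    ∀ φ : L.Formula (Fin n), φ.IsQF → φ.Realize v →
      ∀ k : Fin n, ¬ ({a : M | φ.Realize (Function.update v k a)}).Countable

/-- The successor condition for `rk`, relative to a predicate `rk` standing for "rank ≥ β". -/
def RkSuccCond (rk : Finset M → Prop) (w : Finset M) : Prop :=
  ∀ (n : ℕ) (v : Fin n → M), Function.Injective v → Set.range v = ↑w →
    ∀ φ : L.Formula (Fin n), φ.IsQF → φ.Realize v →
      ∀ k : Fin n, ∃ a : M, a ∉ w ∧ rk (insert a w) ∧
        φ.Realize (Function.update v k a)

/-- `RkGe L M w α` says `rk(w, 𝕄) ≥ α`. -/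
def RkGe (w : Finset M) (α : Ordinal) : Prop :=
  RkBase L M w ∧ ∀ β : Ordinal, β < α → RkSuccCond L M (fun w' => RkGe w' β) w
termination_by α

/-- The successor condition for `rk*`: an `ω₁`-sequence of witnesses. -/
def RkStarSuccCond (rk : Finset M → Prop) (w : Finset M) : Prop :=
  ∀ (n : ℕ) (v : Fin n → M), Function.Injective v → Set.range v = ↑w →
    ∀ φ : L.Formula (Fin n), φ.IsQF → φ.Realize v →
      ∀ k : Fin n, ∃ a : Ordinal.{0} → M,
        Set.InjOn a {i : Ordinal.{0} | i < (Cardinal.aleph 1).ord} ∧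
        a 0 = v k ∧
        (∀ i : Ordinal.{0}, i < (Cardinal.aleph 1).ord → a i ∉ w.erase (v k)) ∧
        (∀ i : Ordinal.{0}, i < (Cardinal.aleph 1).ord → φ.Realize (Function.update v k (a i))) ∧
        (∀ i j : Ordinal.{0}, i < j → j < (Cardinal.aleph 1).ord →
          rk (insert (a i) (insert (a j) (w.erase (v k)))))

/-- `RkStarGe L M w α` says `rk*(w, 𝕄) ≥ α`. -/
def RkStarGe (w : Finset M) (α : Ordinal) : Prop :=
  RkBase L M w ∧ ∀ β : Ordinal, β < α → RkStarSuccCond L M (fun w' => RkStarGe w' β) w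
termination_by α

end Rank

/-- `NPr ε λ`: there is a model on a universe of size `λ` with countable relational
vocabulary all of whose finite nonempty subsets have rank `< ε`. -/
def NPr (ε : Ordinal) (lam : Cardinal) : Prop :=
  ∃ (M : Type) (L : FirstOrder.Language.{0,0}) (S : L.Structure M),
    Cardinal.mk M = lam ∧ (∀ n, Countable (L.Relations n)) ∧
    (∀ n, IsEmpty (L.Functions n)) ∧
    ∀ w : Finset M, w.Nonempty → ¬ @RkGe L M S w ε

/-- `NPr* ε λ`, the analogue of `NPr` for the rank `rk*`. -/
def NPrStar (ε : Ordinal) (lam : Cardinal) : Prop :=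
  ∃ (M : Type) (L : FirstOrder.Language.{0,0}) (S : L.Structure M),
    Cardinal.mk M = lam ∧ (∀ n, Countable (L.Relations n)) ∧
    (∀ n, IsEmpty (L.Functions n)) ∧
    ∀ w : Finset M, w.Nonempty → ¬ @RkStarGe L M S w ε

section Aux
variable {L : Language} {M : Type} [L.Structure M]

/-- Any finset admits an injective enumeration. -/
lemma exists_enum (s : Finset M) :
    ∃ f : Fin s.card → M, Function.Injective f ∧ Set.range f = ↑s := by
  refine ⟨Subtype.val ∘ s.equivFin.symm, Subtype.val_injective.comp s.equivFin.symm.injective, ?_⟩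
  rw [Set.range_comp, Equiv.range_eq_univ, Set.image_univ]
  ext x; simp

lemma fin_add_cases {n r : ℕ} (i : Fin (n + r)) :
    (∃ j, i = Fin.castAdd r j) ∨ (∃ j, i = Fin.natAdd n j) := by
  induction i using Fin.addCases with
  | left j => exact Or.inl ⟨j, rfl⟩
  | right j => exact Or.inr ⟨j, rfl⟩

/-- Any injective enumeration of `v ⊆ w` extends to one of `w`. -/
lemma exists_extend_enum {v w : Finset M} (hvw : v ⊆ w) {n : ℕ} (f : Fin n → M)
    (hf : Function.Injective f) (hr : Set.range f = ↑v) :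
    ∃ (r : ℕ) (u : Fin (n + r) → M), Function.Injective u ∧ Set.range u = ↑w ∧
      u ∘ Fin.castAdd r = f := by
  obtain ⟨e, he, hre⟩ := exists_enum (w \ v)
  refine ⟨(w \ v).card, Fin.append f e, ?_, ?_, ?_⟩
  · intro i j hij
    rcases fin_add_cases i with ⟨i', rfl⟩ | ⟨i', rfl⟩ <;>
      rcases fin_add_cases j with ⟨j', rfl⟩ | ⟨j', rfl⟩ <;>
      simp only [Fin.append_left, Fin.append_right] at hij
    · exact congrArg _ (hf hij)
    · exfalso
      have h1 : f i' ∈ (↑v : Set M) := hr ▸ Set.mem_range_self i'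
      have h2 : e j' ∈ (↑(w \ v) : Set M) := hre ▸ Set.mem_range_self j'
      rw [hij] at h1; simp only [Finset.coe_sdiff, Set.mem_diff] at h2
      exact h2.2 h1
    · exfalso
      have h1 : f j' ∈ (↑v : Set M) := hr ▸ Set.mem_range_self j'
      have h2 : e i' ∈ (↑(w \ v) : Set M) := hre ▸ Set.mem_range_self i'
      rw [← hij] at h1; simp only [Finset.coe_sdiff, Set.mem_diff] at h2
      exact h2.2 h1
    · exact congrArg _ (he hij)
  · ext x
    simp only [Set.mem_range]
    constructor
    · rintro ⟨i, rfl⟩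
      rcases fin_add_cases i with ⟨i', rfl⟩ | ⟨i', rfl⟩
      · rw [Fin.append_left]
        have : f i' ∈ (↑v : Set M) := hr ▸ Set.mem_range_self i'
        exact_mod_cast hvw (by exact_mod_cast this)
      · rw [Fin.append_right]
        have : e i' ∈ (↑(w \ v) : Set M) := hre ▸ Set.mem_range_self i'
        simp only [Finset.coe_sdiff, Set.mem_diff] at this
        exact this.1
    · intro hx
      by_cases hxv : x ∈ v
      · obtain ⟨i, hi⟩ : x ∈ Set.range f := hr ▸ (by exact_mod_cast hxv)
        exact ⟨Fin.castAdd _ i, by rw [Fin.append_left, hi]⟩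
      · have : x ∈ Set.range e := by
          rw [hre]; simp only [Finset.coe_sdiff, Set.mem_diff]
          exact ⟨by exact_mod_cast hx, by exact_mod_cast hxv⟩
        obtain ⟨i, hi⟩ := this
        exact ⟨Fin.natAdd _ i, by rw [Fin.append_right, hi]⟩
  · ext i; simp [Fin.append_left]

/-- Monotonicity of rank in the subset: `v ⊆ w`, `rk(w) ≥ α` implies `rk(v) ≥ α`. -/
lemma rkGe_mono_subset : ∀ α : Ordinal, ∀ v w : Finset M, v ⊆ w →
    RkGe L M w α → RkGe L M v α := by
  intro α
  induction α using Ordinal.induction with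
  | h α IH =>
    intro v w hvw hw
    rw [RkGe] at hw ⊢
    obtain ⟨hwbase, hwsucc⟩ := hw
    constructor
    · -- RkBase v
      intro n f hf hr φ hφ hφf k
      obtain ⟨r, u, hu, hur, huf⟩ := exists_extend_enum hvw f hf hr
      have hrel : (φ.relabel (Fin.castAdd r)).Realize u := by
        rw [Language.Formula.realize_relabel, huf]; exact hφf
      have := hwbase _ u hu hur (φ.relabel (Fin.castAdd r)) (hφ.relabel _) hrel
        (Fin.castAdd r k)
      intro hc; apply this
      have heq : {a : M | (φ.relabel (Fin.castAdd r)).Realize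
          (Function.update u (Fin.castAdd r k) a)} = {a : M | φ.Realize (Function.update f k a)} := by
        ext a
        rw [Set.mem_setOf_eq, Set.mem_setOf_eq, Language.Formula.realize_relabel,
          Function.update_comp_eq_of_injective _ (Fin.castAdd_injective n r), huf]
      rw [heq]; exact hc
    · -- successor condition
      intro β hβ n f hf hr φ hφ hφf k
      obtain ⟨r, u, hu, hur, huf⟩ := exists_extend_enum hvw f hf hr
      have hrel : (φ.relabel (Fin.castAdd r)).Realize u := by
        rw [Language.Formula.realize_relabel, huf]; exact hφf
      obtain ⟨a, haw, hins, hreal⟩ := hwsucc β hβ _ u hu hur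
        (φ.relabel (Fin.castAdd r)) (hφ.relabel _) hrel (Fin.castAdd r k)
      refine ⟨a, fun hav => haw (hvw hav), ?_, ?_⟩
      · exact IH β hβ _ _ (Finset.insert_subset_insert a hvw) hins
      · rw [Language.Formula.realize_relabel,
          Function.update_comp_eq_of_injective _ (Fin.castAdd_injective n r), huf] at hreal
        exact hreal

/-- Monotonicity of rank in the ordinal. -/
lemma rkGe_mono_ord {w : Finset M} {α β : Ordinal} (hβα : β ≤ α)
    (h : RkGe L M w α) : RkGe L M w β := by
  rw [RkGe] at h ⊢
  exact ⟨h.1, fun γ hγ => h.2 γ (hγ.trans_le hβα)⟩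

end Aux

/-- Monotonicity of the rank: if ∅ ≠ v ⊆ w and rk(w, 𝕄) ≥ α ≥ β then rk(v, 𝕄) ≥ β. -/
theorem stmt_5 (L : FirstOrder.Language) (M : Type) [L.Structure M]
    (v w : Finset M) (hv : v.Nonempty) (hvw : v ⊆ w)
    (α β : Ordinal) (hβα : β ≤ α) (h : RkGe L M w α) :
    RkGe L M v β :=
  rkGe_mono_subset β v w hvw (rkGe_mono_ord hβα h)
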